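/- arXiv:cs/0606033 — 4 statements merged into one kernel-verified Lean document; each statement's English description precedes it below -/
import Mathlib

section
/- For every self-delimiting Turing machine C one has 1 ≥ Ω_C ≥ ζ_C ≥ Ω_C/2 ≥ 0; in particular every self-delimiting Turing machine is a tuatara machine (ζ_C ≤ 1). -/
open scoped ENNReal

/-- The domain of a Turing machine (a partial function on binary strings). -/
def dom (f : List Bool →. List Bool) : Set (List Bool) := {p | (f p).Dom}

/-- A machine is self-delimiting if its domain is prefix-free. -/
def SelfDelim (f : List Bool →. List Bool) : Prop :=
  ∀ p ∈ dom f, ∀ q ∈ dom f, p <+: q → p = q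

/-- Chaitin's Omega number of a machine, in `[0,∞]`. -/
noncomputable def Omega (f : List Bool →. List Bool) : ℝ≥0∞ :=
  ∑' p : dom f, (2 : ℝ≥0∞)⁻¹ ^ (p : List Bool).length

/-- `bin n` is the binary expansion of `n` with the leading 1 removed. -/
def bin (n : ℕ) : List Bool := (Nat.bits n).reverse.tail

/-- `Υ[A]`: the set of positive integers whose `bin`-code lies in `A`. -/
def Ups (A : Set (List Bool)) : Set ℕ := {n | 1 ≤ n ∧ bin n ∈ A}

/-- The zeta number of a machine, in `[0,∞]`. -/
noncomputable def zeta (f : List Bool →. List Bool) : ℝ≥0∞ :=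
  ∑' n : Ups (dom f), ((n : ℕ) : ℝ≥0∞)⁻¹

/-- `U` is a universal self-delimiting Turing machine. -/
def UnivSD (U : List Bool →. List Bool) : Prop :=
  SelfDelim U ∧ ∀ C : List Bool →. List Bool, Partrec C → SelfDelim C →
    ∃ c : ℕ, ∀ x ∈ dom C, ∃ p : List Bool, p.length ≤ x.length + c ∧ U p = C x

/-- `T` is a universal (plain) Turing machine. -/
def UnivTM (T : List Bool →. List Bool) : Prop :=
  ∀ C : List Bool →. List Bool, Partrec C →
    ∃ c : ℕ, ∀ x ∈ dom C, ∃ p : List Bool, p.length ≤ x.length + c ∧ T p = C x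

/-- Program-size / plain complexity of a string w.r.t. a machine. -/
noncomputable def Cpx (f : List Bool →. List Bool) (y : List Bool) : ℕ :=
  sInf {n : ℕ | ∃ w : List Bool, w.length = n ∧ y ∈ f w}

/-- Natural complexity of a string w.r.t. a machine, with `min ∅ = ∞`. -/
noncomputable def nabla (f : List Bool →. List Bool) (y : List Bool) : ℝ≥0∞ :=
  sInf {c : ℝ≥0∞ | ∃ n : ℕ, 1 ≤ n ∧ y ∈ f (bin n) ∧ c = (n : ℝ≥0∞)}

/-- The real number with binary digit sequence `x`. -/
noncomputable def realDigits (x : ℕ → Bool) : ℝ :=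
  ∑' i : ℕ, (if x i then (1 : ℝ) else 0) * (2 : ℝ)⁻¹ ^ (i + 1)

/-- The extended nonnegative real with binary digit sequence `x`. -/
noncomputable def ennDigits (x : ℕ → Bool) : ℝ≥0∞ :=
  ∑' i : ℕ, (if x i then (1 : ℝ≥0∞) else 0) * (2 : ℝ≥0∞)⁻¹ ^ (i + 1)

/-- The string of the first `m` digits of the sequence `x`. -/
def prefixStr (x : ℕ → Bool) (m : ℕ) : List Bool := (List.range m).map x

/-- A real is computable if it is approximated to within `2⁻ⁿ` by a computable
sequence of rationals. -/
def ComputableReal (s : ℝ) : Prop :=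
  ∃ f : ℕ → ℚ, Computable f ∧ ∀ n : ℕ, |s - (f n : ℝ)| ≤ (2 : ℝ)⁻¹ ^ n


/-! ### Auxiliary lemmas -/


def ofBits (L : List Bool) : ℕ := L.foldr Nat.bit 0

def enc (l : List Bool) : ℕ := ofBits (l.reverse ++ [true])

lemma ofBits_cons (b : Bool) (L : List Bool) : ofBits (b :: L) = Nat.bit b (ofBits L) := rfl

lemma ofBits_bits (n : ℕ) : ofBits n.bits = n := by
  induction n using Nat.binaryRec' with
  | zero => simp [ofBits]
  | bit b n h ih => rw [Nat.bits_append_bit n b h, ofBits_cons, ih]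

lemma ofBits_lt (L : List Bool) : ofBits L < 2 ^ L.length := by
  induction L with
  | nil => simp [ofBits]
  | cons b L ih =>
    rw [ofBits_cons, Nat.bit_val]
    simp only [List.length_cons, pow_succ]
    cases b <;> simp <;> omega

lemma le_ofBits (L : List Bool) : 2 ^ L.length ≤ ofBits (L ++ [true]) := by
  induction L with
  | nil => simp [ofBits, Nat.bit_val]
  | cons b L ih =>
    rw [List.cons_append, ofBits_cons, Nat.bit_val]
    simp only [List.length_cons, pow_succ]
    cases b <;> simp <;> omega

lemma bits_ofBits (L : List Bool) : (ofBits (L ++ [true])).bits = L ++ [true] := by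
  induction L with
  | nil => simp [ofBits, Nat.bit_val]
  | cons b L ih =>
    rw [List.cons_append, ofBits_cons, Nat.bits_append_bit, ih]
    intro h0
    have := le_ofBits L
    have h1 : (1:ℕ) ≤ 2 ^ L.length := Nat.one_le_two_pow
    omega

lemma one_le_enc (l : List Bool) : 1 ≤ enc l := by
  have := le_ofBits l.reverse
  have h1 : (1:ℕ) ≤ 2 ^ l.reverse.length := Nat.one_le_two_pow
  unfold enc; omega

lemma enc_lt (l : List Bool) : enc l < 2 ^ (l.length + 1) := by
  have := ofBits_lt (l.reverse ++ [true])
  simpa [enc] using this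

lemma le_enc (l : List Bool) : 2 ^ l.length ≤ enc l := by
  simpa [enc] using le_ofBits l.reverse

lemma bin_enc (l : List Bool) : bin (enc l) = l := by
  unfold bin enc
  rw [bits_ofBits]
  simp

lemma bits_getLast (n : ℕ) (hn : 1 ≤ n) : n.bits.getLast? = some true := by
  induction n using Nat.binaryRec' with
  | zero => omega
  | bit b m h ih =>
    rw [Nat.bits_append_bit m b h]
    rcases Nat.eq_zero_or_pos m with hm | hm
    · subst hm; rw [h rfl]; simp
    · exact List.mem_getLast?_cons (ih hm)

lemma bin_spec (n : ℕ) (hn : 1 ≤ n) : (bin n).reverse ++ [true] = n.bits := by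
  have hne : n.bits ≠ [] := by
    intro hnil
    have := ofBits_bits n
    rw [hnil] at this; simp [ofBits] at this; omega
  have hlast : n.bits.getLast hne = true := by
    have := bits_getLast n hn
    rwa [List.getLast?_eq_getLast hne, Option.some_inj] at this
  have hdec : n.bits.dropLast ++ [true] = n.bits := by
    conv_rhs => rw [← List.dropLast_append_getLast hne, hlast]
  unfold bin
  rw [← hdec]
  simp

lemma enc_bin (n : ℕ) (hn : 1 ≤ n) : enc (bin n) = n := by
  conv_rhs => rw [← ofBits_bits n]
  rw [enc, bin_spec n hn]


lemma prefix_total {p q v : List Bool} (hp : p <+: v) (hq : q <+: v) : p <+: q ∨ q <+: p := by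
  rw [List.prefix_iff_eq_take] at hp hq
  rcases le_total p.length q.length with h | h
  · left
    have h2 : (v.take q.length).take p.length = v.take p.length := by
      rw [List.take_take, min_eq_left h]
    rw [hp, hq, ← h2]; exact List.take_prefix _ _
  · right
    have h2 : (v.take p.length).take q.length = v.take q.length := by
      rw [List.take_take, min_eq_left h]
    rw [hp, hq, ← h2]; exact List.take_prefix _ _

lemma kraft_finset (F : Finset (List Bool))
    (hpf : ∀ p ∈ F, ∀ q ∈ F, p <+: q → p = q) :
    ∑ p ∈ F, ((2 : ℝ≥0∞)⁻¹) ^ p.length ≤ 1 := by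
  classical
  set L := F.sup List.length with hL
  have hlen : ∀ p ∈ F, p.length ≤ L := fun p hp => Finset.le_sup hp
  set ext : List Bool → Finset (List.Vector Bool L) :=
    fun p => Finset.univ.filter (fun v => p <+: v.toList) with hext
  -- card of ext
  have hcard : ∀ p ∈ F, (ext p).card = 2 ^ (L - p.length) := by
    intro p hp
    have hpl := hlen p hp
    rw [hext]
    rw [← Fintype.card_coe]
    have e : {v : List.Vector Bool L // p <+: v.toList} ≃ List.Vector Bool (L - p.length) :=
      { toFun := fun v => ⟨v.1.toList.drop p.length, by simp [v.1.2]⟩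
        invFun := fun w => ⟨⟨p ++ w.toList, by simp [w.2]; omega⟩, by simp⟩
        left_inv := by
          rintro ⟨v, hpre⟩
          obtain ⟨t, ht⟩ := hpre
          apply Subtype.ext
          apply List.Vector.toList_injective
          simp [← ht, List.drop_left]
        right_inv := by
          rintro ⟨w, hw⟩
          simp
          rfl }
    have := Fintype.card_congr e
    rw [card_vector, Fintype.card_bool] at this
    rw [← this]
    apply Fintype.card_congr
    apply Equiv.subtypeEquivRight
    intro v
    simp
  -- disjointness
  have hdisj : (F : Set (List Bool)).PairwiseDisjoint ext := by
    intro p hp q hq hne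
    simp only [Finset.disjoint_left, hext, Finset.mem_filter, Finset.mem_univ, true_and]
    intro v hpv hqv
    rcases prefix_total hpv hqv with h | h
    · exact hne (hpf p hp q hq h)
    · exact hne ((hpf q hq p hp h).symm)
  have hsum : ∑ p ∈ F, (ext p).card ≤ 2 ^ L := by
    rw [← Finset.card_biUnion (fun p hp q hq hne => hdisj hp hq hne)]
    calc (F.biUnion ext).card ≤ Fintype.card (List.Vector Bool L) := Finset.card_le_univ _
      _ = 2 ^ L := by rw [card_vector]; rfl
  -- now transfer to ℝ≥0∞
  have key : ∀ p ∈ F, ((2 : ℝ≥0∞)⁻¹) ^ p.length = ((2:ℝ≥0∞) ^ (L - p.length)) * ((2:ℝ≥0∞)⁻¹) ^ L := by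
    intro p hp
    have hpl := hlen p hp
    have hsplit : ((2:ℝ≥0∞))⁻¹ ^ L = 2⁻¹ ^ (L - p.length) * 2⁻¹ ^ p.length := by
      rw [← pow_add]; congr 1; omega
    rw [hsplit, ← mul_assoc, ← mul_pow,
      ENNReal.mul_inv_cancel (by norm_num) (by norm_num), one_pow, one_mul]
  calc ∑ p ∈ F, ((2 : ℝ≥0∞)⁻¹) ^ p.length
      = ∑ p ∈ F, ((2:ℝ≥0∞) ^ (L - p.length)) * ((2:ℝ≥0∞)⁻¹) ^ L := Finset.sum_congr rfl key
    _ = (∑ p ∈ F, (2:ℝ≥0∞) ^ (L - p.length)) * ((2:ℝ≥0∞)⁻¹) ^ L := by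
        rw [Finset.sum_mul]
    _ ≤ ((2:ℝ≥0∞) ^ L) * ((2:ℝ≥0∞)⁻¹) ^ L := by
        apply mul_le_mul_left
        have : ∑ p ∈ F, (2:ℝ≥0∞) ^ (L - p.length) = ((∑ p ∈ F, (ext p).card : ℕ) : ℝ≥0∞) := by
          push_cast
          apply Finset.sum_congr rfl
          intro p hp
          rw [hcard p hp]
          push_cast
          rfl
        rw [this]
        calc ((∑ p ∈ F, (ext p).card : ℕ) : ℝ≥0∞) ≤ ((2 ^ L : ℕ) : ℝ≥0∞) := by
              exact_mod_cast Nat.cast_le.mpr hsum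
          _ = (2:ℝ≥0∞) ^ L := by push_cast; rfl
    _ = 1 := by
        rw [← mul_pow, ENNReal.mul_inv_cancel (by norm_num) (by norm_num), one_pow]

/-- Every self-delimiting Turing machine `C` satisfies
`1 ≥ Ω_C ≥ ζ_C ≥ Ω_C/2 ≥ 0`; in particular it is a tuatara machine. -/
theorem stmt_0 (C : List Bool →. List Bool) (hC : Partrec C) (hsd : SelfDelim C) :
    1 ≥ Omega C ∧ Omega C ≥ zeta C ∧ zeta C ≥ Omega C / 2 ∧ Omega C / 2 ≥ 0 := by
  classical
  -- the equivalence between dom C and Ups (dom C)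
  set e : ↥(dom C) ≃ ↥(Ups (dom C)) :=
    { toFun := fun p => ⟨enc p, one_le_enc p, by rw [bin_enc]; exact p.2⟩
      invFun := fun n => ⟨bin n, n.2.2⟩
      left_inv := fun p => Subtype.ext (bin_enc p)
      right_inv := fun n => Subtype.ext (enc_bin n n.2.1) } with he
  have hzeta : zeta C = ∑' p : dom C, ((enc (p : List Bool) : ℕ) : ℝ≥0∞)⁻¹ := by
    rw [zeta, ← Equiv.tsum_eq e (fun n : Ups (dom C) => ((n : ℕ) : ℝ≥0∞)⁻¹)]
    rfl
  have hcast : ∀ k : ℕ, ((2 ^ k : ℕ) : ℝ≥0∞) = (2 : ℝ≥0∞) ^ k := by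
    intro k; push_cast; rfl
  refine ⟨?_, ?_, ?_, zero_le⟩
  · -- Kraft inequality
    rw [ge_iff_le, Omega]
    apply Summable.tsum_le_of_sum_le ENNReal.summable
    intro s
    have himg : ∑ x ∈ s, ((2:ℝ≥0∞)⁻¹) ^ (x : List Bool).length
        = ∑ p ∈ s.image (fun x : ↥(dom C) => (x : List Bool)), ((2:ℝ≥0∞)⁻¹) ^ p.length :=
      (Finset.sum_image (f := fun p : List Bool => ((2:ℝ≥0∞)⁻¹) ^ p.length)
        (s := s) (g := fun x : ↥(dom C) => (x : List Bool))
        (fun x _ y _ h => Subtype.coe_injective h)).symm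
    rw [himg]
    apply kraft_finset
    intro p hp q hq hpq
    simp only [Finset.mem_image] at hp hq
    obtain ⟨⟨p', hp'⟩, _, rfl⟩ := hp
    obtain ⟨⟨q', hq'⟩, _, rfl⟩ := hq
    exact hsd _ hp' _ hq' hpq
  · rw [ge_iff_le, hzeta, Omega]
    apply ENNReal.tsum_le_tsum
    intro p
    have h1 : ((2 ^ (p : List Bool).length : ℕ) : ℝ≥0∞) ≤ ((enc (p : List Bool) : ℕ) : ℝ≥0∞) := by
      exact_mod_cast le_enc (p : List Bool)
    calc ((enc (p : List Bool) : ℕ) : ℝ≥0∞)⁻¹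
        ≤ ((2 ^ (p : List Bool).length : ℕ) : ℝ≥0∞)⁻¹ := ENNReal.inv_le_inv' h1
      _ = ((2:ℝ≥0∞)⁻¹) ^ (p : List Bool).length := by rw [hcast, ← ENNReal.inv_pow]
  · rw [ge_iff_le, hzeta, Omega, div_eq_mul_inv, ← ENNReal.tsum_mul_right]
    apply ENNReal.tsum_le_tsum
    intro p
    have h1 : ((enc (p : List Bool) : ℕ) : ℝ≥0∞) ≤ ((2 ^ ((p : List Bool).length + 1) : ℕ) : ℝ≥0∞) := by
      exact_mod_cast (enc_lt (p : List Bool)).le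
    calc ((2:ℝ≥0∞)⁻¹) ^ (p : List Bool).length * 2⁻¹
        = ((2:ℝ≥0∞)⁻¹) ^ ((p : List Bool).length + 1) := by rw [pow_succ]
      _ = ((2 ^ ((p : List Bool).length + 1) : ℕ) : ℝ≥0∞)⁻¹ := by rw [hcast, ← ENNReal.inv_pow]
      _ ≤ ((enc (p : List Bool) : ℕ) : ℝ≥0∞)⁻¹ := ENNReal.inv_le_inv' h1
end

section
/- For every universal self-delimiting Turing machine U, liminf_{n→∞} (1/n)·log₂(#{p ∈ dom(U) : |p| ≤ n}) = 1. -/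
open scoped ENNReal

/-! ### Auxiliary machinery for `stmt_1` -/

/-- The auxiliary self-delimiting machine: its domain consists of strings of the
form `0^k 1 x` with `|x| = m·k`, and it acts as the identity there. -/
def Cm (m : ℕ) : List Bool →. List Bool :=
  fun p => Part.ofOption (if p.length = (m+1) * (p.idxOf true) + 1 then some p else none)

lemma Cm_partrec (m : ℕ) : Partrec (Cm m) := by
  apply Computable.ofOption
  have hidx : Primrec fun p : List Bool => p.idxOf true :=
    Primrec.list_idxOf.comp (.const true) .id
  have hcond : PrimrecPred fun p : List Bool =>
      p.length = (m+1) * (p.idxOf true) + 1 :=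
    Primrec.eq.comp Primrec.list_length
      (Primrec.succ.comp (Primrec.nat_mul.comp (.const (m+1)) hidx))
  exact (Primrec.ite hcond (Primrec.option_some.comp .id) (.const none)).to_comp

lemma mem_dom_Cm {m : ℕ} {p : List Bool} :
    p ∈ dom (Cm m) ↔ p.length = (m+1) * (p.idxOf true) + 1 := by
  constructor
  · intro h
    by_contra hc
    simp [dom, Cm, Part.ofOption, hc] at h
  · intro h
    simp [dom, Cm, Part.ofOption, h]

lemma Cm_eq {m : ℕ} {p : List Bool} (h : p ∈ dom (Cm m)) : Cm m p = Part.some p := by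
  rw [mem_dom_Cm] at h
  simp [Cm, h]

lemma mem_dom_Cm_true {m : ℕ} {p : List Bool} (h : p ∈ dom (Cm m)) : true ∈ p := by
  rw [mem_dom_Cm] at h
  rw [← List.idxOf_lt_length_iff]
  by_contra hc
  push_neg at hc
  have h2 : p.idxOf true = p.length := le_antisymm (List.idxOf_le_length) hc
  rw [h2] at h
  have h3 : p.length ≤ (m+1) * p.length := Nat.le_mul_of_pos_left _ (by omega)
  omega

lemma Cm_selfDelim (m : ℕ) : SelfDelim (Cm m) := by
  intro p hp q hq hpq
  have hp' := (mem_dom_Cm).1 hp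
  have hq' := (mem_dom_Cm).1 hq
  obtain ⟨r, rfl⟩ := hpq
  have : (p ++ r).idxOf true = p.idxOf true :=
    List.idxOf_append_of_mem (mem_dom_Cm_true hp)
  rw [this] at hq'
  have : r = [] := by
    have h3 := List.length_append (as := p) (bs := r)
    rw [hq', hp'] at h3
    generalize (m+1) * List.idxOf true p = t at h3
    have : r.length = 0 := by omega
    exact List.length_eq_zero_iff.1 this
  simp [this]

lemma mem_dom_Cm_of (m k : ℕ) (x : List Bool) (hx : x.length = m * k) :
    (List.replicate k false ++ true :: x) ∈ dom (Cm m) := by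
  rw [mem_dom_Cm]
  have hidx : (List.replicate k false ++ true :: x).idxOf true = k := by
    rw [List.idxOf_append_of_notMem (by simp), List.idxOf_cons_self]
    simp
  rw [hidx]
  simp [hx]
  ring

lemma ncard_len_eq (L : ℕ) : Set.ncard {x : List Bool | x.length = L} = 2 ^ L := by
  rw [← Nat.card_coe_set_eq]
  have : Nat.card (List.Vector Bool L) = 2 ^ L := by
    simp [Nat.card_eq_fintype_card, card_vector]
  exact this

lemma target_finite (U : List Bool →. List Bool) (n : ℕ) :
    {p : List Bool | p ∈ dom U ∧ p.length ≤ n}.Finite :=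
  (List.finite_length_le Bool n).subset fun _ hp => hp.2

lemma count_upper (U : List Bool →. List Bool) (hsd : SelfDelim U) (n : ℕ) :
    Set.ncard {p : List Bool | p ∈ dom U ∧ p.length ≤ n} ≤ 2 ^ n := by
  rw [← ncard_len_eq n]
  apply Set.ncard_le_ncard_of_injOn (fun p => p ++ List.replicate (n - p.length) false)
    (fun p hp => by simp [hp.2]) ?_ (List.finite_length_eq Bool n)
  intro p hp q hq he
  simp only at he
  rcases le_total p.length q.length with h | h
  · have h1 : p <+: q ++ List.replicate (n - q.length) false := by
      rw [← he]; exact ⟨_, rfl⟩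
    have h2 : p <+: q := List.prefix_of_prefix_length_le h1 ⟨_, rfl⟩ h
    exact hsd p hp.1 q hq.1 h2
  · have h1 : q <+: p ++ List.replicate (n - p.length) false := by
      rw [he]; exact ⟨_, rfl⟩
    have h2 : q <+: p := List.prefix_of_prefix_length_le h1 ⟨_, rfl⟩ h
    exact (hsd q hq.1 p hp.1 h2).symm

lemma count_lower_aux (U : List Bool →. List Bool) (L : ℕ) (n : ℕ)
    (f : List.Vector Bool L → List Bool)
    (hf : ∀ x, f x ∈ {p : List Bool | p ∈ dom U ∧ p.length ≤ n})
    (hinj : Function.Injective f) :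
    2 ^ L ≤ Set.ncard {p : List Bool | p ∈ dom U ∧ p.length ≤ n} := by
  have h := Set.ncard_le_ncard_of_injOn (s := Set.univ) f (fun x _ => hf x)
    (hinj.injOn) (target_finite U n)
  rw [Set.ncard_univ, Nat.card_eq_fintype_card, card_vector] at h
  simpa using h

lemma count_lower (U : List Bool →. List Bool) (huniv : UnivSD U) (m : ℕ) :
    ∃ c : ℕ, ∀ k n : ℕ, (m+1)*k + 1 + c ≤ n →
      2 ^ (m*k) ≤ Set.ncard {p : List Bool | p ∈ dom U ∧ p.length ≤ n} := by
  obtain ⟨c, hc⟩ := huniv.2 (Cm m) (Cm_partrec m) (Cm_selfDelim m)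
  refine ⟨c, fun k n hn => ?_⟩
  have hsel : ∀ x : List.Vector Bool (m*k), ∃ p : List Bool,
      p.length ≤ n ∧ U p = Part.some (List.replicate k false ++ true :: x.1) := by
    intro x
    have hs := mem_dom_Cm_of m k x.1 x.2
    obtain ⟨p, hp1, hp2⟩ := hc _ hs
    refine ⟨p, ?_, ?_⟩
    · have hlen : (List.replicate k false ++ true :: x.1).length = (m+1)*k+1 := by
        simp [x.2]; ring
      rw [hlen] at hp1
      omega
    · rw [hp2, Cm_eq hs]
  choose g hg1 hg2 using hsel
  apply count_lower_aux U (m*k) n g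
  · intro x
    refine ⟨?_, hg1 x⟩
    show (U (g x)).Dom
    rw [hg2 x]
    trivial
  · intro x y hxy
    have h1 : Part.some (List.replicate k false ++ true :: x.1)
        = Part.some (List.replicate k false ++ true :: y.1) := by
      rw [← hg2 x, ← hg2 y, hxy]
    have h2 : x.1 = y.1 := by
      have := Part.some_injective h1
      simpa using this
    exact List.Vector.toList_injective h2

/-- For every universal self-delimiting Turing machine `U`,
`liminf_{n→∞} (1/n)·log₂(#{p ∈ dom U : |p| ≤ n}) = 1`. -/
theorem stmt_1 (U : List Bool →. List Bool) (hU : Partrec U) (huniv : UnivSD U) :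
    Filter.liminf
      (fun n : ℕ =>
        Real.logb 2 ((Set.ncard {p : List Bool | p ∈ dom U ∧ p.length ≤ n} : ℝ)) / n)
      Filter.atTop = 1 := by
  apply Filter.Tendsto.liminf_eq
  rw [Metric.tendsto_atTop]
  intro ε hε
  set m : ℕ := ⌈(4:ℝ)/ε⌉₊ with hm_def
  have hm : (1:ℝ)/(m+1) ≤ ε/4 := by
    have h1 : (4:ℝ)/ε ≤ m := Nat.le_ceil _
    rw [div_le_div_iff₀ (by positivity) (by positivity)]
    rw [div_le_iff₀ hε] at h1
    nlinarith [(Nat.cast_nonneg m : (0:ℝ) ≤ m)]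
  obtain ⟨c, hc⟩ := count_lower U huniv m
  refine ⟨max (1 + c + m) (max 1 ⌈(4*(1+c+m:ℝ))/ε⌉₊), fun n hn => ?_⟩
  have hn1 : 1 + c + m ≤ n := le_trans (le_max_left _ _) hn
  have hn2 : 1 ≤ n := le_trans (le_trans (le_max_left _ _) (le_max_right _ _)) hn
  have hn3 : (4*(1+c+m:ℝ))/ε ≤ n := by
    have h := le_trans (le_trans (le_max_right _ _) (le_max_right _ _)) hn
    exact le_trans (Nat.le_ceil _) (by exact_mod_cast h)
  have hnR : (0:ℝ) < n := by exact_mod_cast hn2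
  obtain ⟨k, hk1, hk2⟩ : ∃ k : ℕ, (m+1)*k + 1 + c ≤ n ∧ n ≤ (m+1)*k + m + 1 + c := by
    refine ⟨(n-1-c)/(m+1), ?_, ?_⟩
    · have h2 : (m+1) * ((n-1-c)/(m+1)) ≤ n - 1 - c := by
        rw [mul_comm]; exact Nat.div_mul_le_self _ _
      generalize (m+1) * ((n-1-c)/(m+1)) = M at h2 ⊢
      omega
    · have hdm := Nat.div_add_mod (n-1-c) (m+1)
      have hmod := Nat.mod_lt (n-1-c) (y := m+1) (by omega)
      generalize (n-1-c) % (m+1) = r at hdm hmod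
      generalize (m+1) * ((n-1-c)/(m+1)) = M at hdm ⊢
      omega
  have hcount : 2 ^ (m*k) ≤ Set.ncard {p : List Bool | p ∈ dom U ∧ p.length ≤ n} :=
    hc k n hk1
  -- real versions
  have hA : (n:ℝ) ≤ (m+1)*k + m + 1 + c := by exact_mod_cast hk2
  have hB : ((m:ℝ)+1)*k + 1 + c ≤ n := by exact_mod_cast hk1
  have hC : (k:ℝ) ≤ (n:ℝ)/(m+1) := by
    rw [le_div_iff₀ (by positivity)]
    nlinarith
  have hD : (n:ℝ)/(m+1) ≤ (n:ℝ)*(ε/4) := by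
    rw [div_le_iff₀ (by positivity)]
    have h1 : (1:ℝ) ≤ (m+1)*(ε/4) := by
      rw [div_le_div_iff₀ (by positivity) (by norm_num)] at hm
      nlinarith
    nlinarith
  have hE : (1+c+m:ℝ) ≤ (n:ℝ)*(ε/4) := by
    rw [div_le_iff₀ hε] at hn3
    nlinarith
  have hkey : (1 - ε/2)*(n:ℝ) ≤ ((m*k : ℕ):ℝ) := by
    push_cast
    nlinarith
  have hpos : (0:ℕ) < Set.ncard {p : List Bool | p ∈ dom U ∧ p.length ≤ n} :=
    lt_of_lt_of_le (Nat.pow_pos (by norm_num)) hcount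
  set N := Set.ncard {p : List Bool | p ∈ dom U ∧ p.length ≤ n} with hN
  have hup : Real.logb 2 (N:ℝ) ≤ n := by
    have h2n : (N:ℝ) ≤ (2:ℝ)^n := by
      exact_mod_cast count_upper U huniv.1 n
    calc Real.logb 2 (N:ℝ) ≤ Real.logb 2 ((2:ℝ)^n) := by
          rw [Real.logb_le_logb (by norm_num) (by exact_mod_cast hpos) (by positivity)]
          exact h2n
      _ = n := by
          rw [Real.logb_pow, Real.logb_self_eq_one (by norm_num)]
          ring
  have hlo : ((m*k : ℕ):ℝ) ≤ Real.logb 2 (N:ℝ) := by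
    have h2n : ((2:ℝ))^(m*k) ≤ (N:ℝ) := by exact_mod_cast hcount
    calc ((m*k : ℕ):ℝ) = Real.logb 2 ((2:ℝ)^(m*k)) := by
          rw [Real.logb_pow, Real.logb_self_eq_one (by norm_num)]
          ring
      _ ≤ Real.logb 2 (N:ℝ) := by
          rw [Real.logb_le_logb (by norm_num) (by positivity) (by exact_mod_cast hpos)]
          exact h2n
  have hF_up : Real.logb 2 (N:ℝ) / n ≤ 1 := by
    rw [div_le_one hnR]; exact hup
  have hF_lo : 1 - ε/2 ≤ Real.logb 2 (N:ℝ) / n := by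
    rw [le_div_iff₀ hnR]
    calc (1 - ε/2)*(n:ℝ) ≤ ((m*k : ℕ):ℝ) := hkey
      _ ≤ Real.logb 2 (N:ℝ) := hlo
  rw [Real.dist_eq, abs_lt]
  constructor <;> nlinarith
end

section
/- (a) For every Turing machine M, ζ_M < ∞ if and only if Ω_M < ∞ (i.e. the family (1/n)_{n ∈ Υ[dom(M)]} is summable iff the family (2^{-|p|})_{p ∈ dom(M)} is summable). (b) There exists a tuatara machine T (a Turing machine with ζ_T ≤ 1) such that Ω_T > 1; hence the class of machines with Ω ≤ 1 is strictly included in the class of tuatara machines. -/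
open scoped ENNReal

/- auxiliary: inverse of `bin` -/
def gg (l : List Bool) : ℕ := l.foldl (fun n b => 2 * n + b.toNat) 1

lemma gg_append (l : List Bool) (b : Bool) : gg (l ++ [b]) = 2 * gg l + b.toNat := by
  simp [gg, List.foldl_append]

lemma gg_bits (l : List Bool) : Nat.bits (gg l) = l.reverse ++ [true] := by
  induction l using List.reverseRecOn with
  | nil => simp [gg, Nat.one_bits]
  | append_singleton l b ih =>
      have h1 : gg l ≠ 0 := by
        intro h; have := congrArg Nat.bits h; rw [ih] at this
        rw [Nat.zero_bits] at this; simp at this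
      have : gg (l ++ [b]) = Nat.bit b (gg l) := by
        rw [gg_append, Nat.bit]; cases b <;> simp
      rw [this, Nat.bits_append_bit _ _ (fun h => absurd h h1), ih]
      simp

lemma gg_pos (l : List Bool) : 1 ≤ gg l := by
  rcases Nat.eq_zero_or_pos (gg l) with h | h
  · have := congrArg Nat.bits h; rw [gg_bits] at this
    rw [Nat.zero_bits] at this; simp at this
  · exact h

lemma bin_gg (l : List Bool) : bin (gg l) = l := by
  rw [bin, gg_bits]; simp

lemma gg_bounds (l : List Bool) : 2 ^ l.length ≤ gg l ∧ gg l < 2 ^ (l.length + 1) := by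
  induction l using List.reverseRecOn with
  | nil => simp [gg]
  | append_singleton l b ih =>
      rw [gg_append]
      constructor
      · simp only [List.length_append, List.length_singleton]
        calc 2 ^ (l.length + 1) = 2 * 2 ^ l.length := by ring
        _ ≤ 2 * gg l := by omega
        _ ≤ 2 * gg l + b.toNat := Nat.le_add_right _ _
      · have hb : b.toNat ≤ 1 := Bool.toNat_le _
        simp only [List.length_append, List.length_singleton]
        have : gg l < 2 ^ (l.length + 1) := ih.2
        calc 2 * gg l + b.toNat < 2 * 2 ^ (l.length + 1) := by omega
        _ = 2 ^ (l.length + 1 + 1) := by ring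

lemma gg_surj : ∀ n : ℕ, 1 ≤ n → ∃ l, gg l = n := by
  intro n
  induction n using Nat.strong_induction_on with
  | _ n ih =>
    intro hn
    rcases Nat.lt_or_ge n 2 with h | h
    · exact ⟨[], by interval_cases n; rfl⟩
    · obtain ⟨l, hl⟩ := ih (n / 2) (by omega) (by omega)
      refine ⟨l ++ [decide (n % 2 = 1)], ?_⟩
      rw [gg_append, hl]
      rcases Nat.even_or_odd n with he | ho
      · obtain ⟨k, hk⟩ := he
        have : n % 2 = 0 := by omega
        simp [this]; omega
      · obtain ⟨k, hk⟩ := ho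
        have : n % 2 = 1 := by omega
        simp [this]; omega

lemma gg_bin {n : ℕ} (hn : 1 ≤ n) : gg (bin n) = n := by
  obtain ⟨l, rfl⟩ := gg_surj n hn
  rw [bin_gg]

/- Part (a) -/
lemma part_a (M : List Bool →. List Bool) : zeta M < ⊤ ↔ Omega M < ⊤ := by
  let e : Ups (dom M) ≃ dom M :=
    { toFun := fun n => ⟨bin n, n.2.2⟩
      invFun := fun p => ⟨gg p, ⟨gg_pos p, by rw [bin_gg]; exact p.2⟩⟩
      left_inv := fun n => Subtype.ext (gg_bin n.2.1)
      right_inv := fun p => Subtype.ext (bin_gg p) }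
  have hz : zeta M = ∑' p : dom M, ((gg p : ℕ) : ℝ≥0∞)⁻¹ := by
    rw [zeta, ← Equiv.tsum_eq e (fun p : dom M => ((gg (p : List Bool) : ℕ) : ℝ≥0∞)⁻¹)]
    exact tsum_congr fun n => by simp [e, gg_bin n.2.1]
  have h1 : ∀ p : List Bool, ((gg p : ℕ) : ℝ≥0∞)⁻¹ ≤ (2 : ℝ≥0∞)⁻¹ ^ p.length := by
    intro p
    rw [← ENNReal.inv_pow]
    apply ENNReal.inv_le_inv.2
    exact_mod_cast Nat.cast_le.2 (gg_bounds p).1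
  have h2 : ∀ p : List Bool, (2 : ℝ≥0∞)⁻¹ ^ p.length ≤ 2 * ((gg p : ℕ) : ℝ≥0∞)⁻¹ := by
    intro p
    have hone : (2 : ℝ≥0∞) * 2⁻¹ = 1 :=
      ENNReal.mul_inv_cancel two_ne_zero ENNReal.ofNat_ne_top
    have hb : ((gg p : ℕ) : ℝ≥0∞) ≤ 2 ^ (p.length + 1) := by
      exact_mod_cast Nat.cast_le.2 (gg_bounds p).2.le
    have hiv : ((2 : ℝ≥0∞) ^ (p.length + 1))⁻¹ ≤ ((gg p : ℕ) : ℝ≥0∞)⁻¹ :=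
      ENNReal.inv_le_inv.2 hb
    calc (2 : ℝ≥0∞)⁻¹ ^ p.length = (2 * 2⁻¹) * 2⁻¹ ^ p.length := by rw [hone, one_mul]
    _ = 2 * 2⁻¹ ^ (p.length + 1) := by rw [pow_succ']; ring
    _ = 2 * ((2 : ℝ≥0∞) ^ (p.length + 1))⁻¹ := by rw [ENNReal.inv_pow]
    _ ≤ 2 * ((gg p : ℕ) : ℝ≥0∞)⁻¹ := by exact mul_le_mul_right hiv 2
  have hzO : zeta M ≤ Omega M := by
    rw [hz, Omega]; exact ENNReal.tsum_le_tsum fun p => h1 p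
  have hOz : Omega M ≤ 2 * zeta M := by
    rw [hz, Omega, ← ENNReal.tsum_mul_left]
    exact ENNReal.tsum_le_tsum fun p => h2 p
  constructor
  · intro h
    exact lt_of_le_of_lt hOz (ENNReal.mul_lt_top (by simp) h)
  · intro h
    exact lt_of_le_of_lt hzO h


/- Part (b): an explicit tuatara machine -/
def Tb : List Bool →. List Bool := fun p =>
  ((cond (decide (p.length = 2 ∨ p = [false, false, false])) (some []) none :
      Option (List Bool)) : Part (List Bool))

lemma Tb_partrec : Partrec Tb := by
  apply Computable.ofOption
  apply Computable.cond ?_ (Computable.const _) (Computable.const _)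
  apply Primrec.to_comp
  exact PrimrecPred.decide (PrimrecPred.or (Primrec.eq.comp Primrec.list_length (Primrec.const 2))
    (Primrec.eq.comp Primrec.id (Primrec.const ([false, false, false] : List Bool))))

lemma mem_dom_Tb (p : List Bool) :
    p ∈ dom Tb ↔ (p.length = 2 ∨ p = [false, false, false]) := by
  show ((cond (decide (p.length = 2 ∨ p = [false, false, false])) (some []) none :
      Option (List Bool)) : Part (List Bool)).Dom ↔ _
  by_cases h : p.length = 2 ∨ p = [false, false, false] <;> simp [h]

def Sb : Finset (List Bool) :=
  {[false, false], [false, true], [true, false], [true, true], [false, false, false]}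

lemma dom_Tb : dom Tb = ↑Sb := by
  ext p
  rw [mem_dom_Tb, Finset.mem_coe]
  constructor
  · rintro (h | rfl)
    · match p, h with
      | [a, b], _ => cases a <;> cases b <;> decide
    · decide
  · intro h; fin_cases h <;> simp [Sb]

lemma bin4 : bin 4 = [false, false] := by
  rw [show (4 : ℕ) = gg [false, false] from rfl, bin_gg]
lemma bin5 : bin 5 = [false, true] := by
  rw [show (5 : ℕ) = gg [false, true] from rfl, bin_gg]
lemma bin6 : bin 6 = [true, false] := by
  rw [show (6 : ℕ) = gg [true, false] from rfl, bin_gg]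
lemma bin7 : bin 7 = [true, true] := by
  rw [show (7 : ℕ) = gg [true, true] from rfl, bin_gg]
lemma bin8 : bin 8 = [false, false, false] := by
  rw [show (8 : ℕ) = gg [false, false, false] from rfl, bin_gg]

lemma ups_Tb : Ups (dom Tb) = ↑({4, 5, 6, 7, 8} : Finset ℕ) := by
  ext n
  simp only [Ups, Set.mem_setOf_eq, mem_dom_Tb, Finset.coe_insert, Set.mem_insert_iff,
    Finset.coe_singleton, Set.mem_singleton_iff]
  constructor
  · rintro ⟨hn, h | h⟩
    · have hgb := gg_bin hn
      have hbd := gg_bounds (bin n)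
      rw [h, hgb] at hbd
      norm_num at hbd
      omega
    · have hgb := gg_bin hn
      rw [h] at hgb
      have : n = 8 := by rw [← hgb]; rfl
      omega
  · rintro (rfl | rfl | rfl | rfl | rfl)
    · exact ⟨by norm_num, Or.inl (by rw [bin4]; rfl)⟩
    · exact ⟨by norm_num, Or.inl (by rw [bin5]; rfl)⟩
    · exact ⟨by norm_num, Or.inl (by rw [bin6]; rfl)⟩
    · exact ⟨by norm_num, Or.inl (by rw [bin7]; rfl)⟩
    · exact ⟨by norm_num, Or.inr bin8⟩

lemma zeta_Tb : zeta Tb ≤ 1 := by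
  rw [zeta, ups_Tb]
  erw [Finset.tsum_subtype ({4, 5, 6, 7, 8} : Finset ℕ) (fun n => ((n : ℕ) : ℝ≥0∞)⁻¹)]
  rw [Finset.sum_insert (by decide), Finset.sum_insert (by decide),
    Finset.sum_insert (by decide), Finset.sum_insert (by decide), Finset.sum_singleton]
  push_cast
  have h : ∀ m : NNReal, m ≠ 0 → ((m : ℝ≥0∞))⁻¹ = ((m⁻¹ : NNReal) : ℝ≥0∞) := fun m hm =>
    (ENNReal.coe_inv hm).symm
  rw [show (4:ℝ≥0∞) = ((4:NNReal):ℝ≥0∞) by norm_cast, show (5:ℝ≥0∞) = ((5:NNReal):ℝ≥0∞) by norm_cast,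
    show (6:ℝ≥0∞) = ((6:NNReal):ℝ≥0∞) by norm_cast, show (7:ℝ≥0∞) = ((7:NNReal):ℝ≥0∞) by norm_cast,
    show (8:ℝ≥0∞) = ((8:NNReal):ℝ≥0∞) by norm_cast,
    h 4 (by norm_num), h 5 (by norm_num), h 6 (by norm_num), h 7 (by norm_num), h 8 (by norm_num),
    ← ENNReal.coe_add, ← ENNReal.coe_add, ← ENNReal.coe_add, ← ENNReal.coe_add,
    ← ENNReal.coe_one, ENNReal.coe_le_coe, ← NNReal.coe_le_coe]
  push_cast
  norm_num

lemma omega_Tb : 1 < Omega Tb := by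
  rw [Omega, dom_Tb]
  erw [Finset.tsum_subtype Sb (fun p => (2 : ℝ≥0∞)⁻¹ ^ p.length)]
  have hone : (2 : ℝ≥0∞) * 2⁻¹ = 1 := ENNReal.mul_inv_cancel two_ne_zero ENNReal.ofNat_ne_top
  rw [show Sb = {[false, false], [false, true], [true, false], [true, true],
    [false, false, false]} from rfl]
  rw [Finset.sum_insert (by decide), Finset.sum_insert (by decide),
    Finset.sum_insert (by decide), Finset.sum_insert (by decide), Finset.sum_singleton]
  simp only [List.length_cons, List.length_nil]
  have h4 : ((2:ℝ≥0∞)⁻¹ ^ 2 + 2⁻¹ ^ 2 + 2⁻¹ ^ 2 + 2⁻¹ ^ 2) = 1 := by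
    have : ((2:ℝ≥0∞)⁻¹ ^ 2 + 2⁻¹ ^ 2 + 2⁻¹ ^ 2 + 2⁻¹ ^ 2) = (2 * 2⁻¹) * (2 * 2⁻¹) := by ring
    rw [this, hone, one_mul]
  calc (1:ℝ≥0∞) < 1 + 2⁻¹ ^ 3 := ENNReal.lt_add_right ENNReal.one_ne_top (by simp)
  _ = (2⁻¹ ^ 2 + 2⁻¹ ^ 2 + 2⁻¹ ^ 2 + 2⁻¹ ^ 2) + 2⁻¹ ^ 3 := by rw [h4]
  _ = _ := by ring_nf

/-- (a) For every Turing machine `M`, `ζ_M < ∞` iff `Ω_M < ∞`.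
(b) There exists a tuatara machine `T` with `Ω_T > 1`. -/
theorem stmt_5 :
    (∀ M : List Bool →. List Bool, Partrec M → (zeta M < ⊤ ↔ Omega M < ⊤)) ∧
    (∃ T : List Bool →. List Bool, Partrec T ∧ zeta T ≤ 1 ∧ 1 < Omega T) := by
  constructor
  · exact fun M _ => part_a M
  · exact ⟨Tb, Tb_partrec, zeta_Tb, omega_Tb⟩
end

section
/- For each self-delimiting Turing machine C there exists a tuatara machine V such that ζ_V = Ω_C. -/
open scoped ENNReal

namespace Stmt7

def idx (w : List Bool) : ℕ := w.foldl (fun a b => 2 * a + cond b 1 0) 1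

lemma idx_append (w : List Bool) (b : Bool) :
    idx (w ++ [b]) = 2 * idx w + cond b 1 0 := by
  simp [idx, List.foldl_append]

lemma one_le_foldl (w : List Bool) : ∀ a : ℕ, 1 ≤ a →
    1 ≤ w.foldl (fun a b => 2 * a + cond b 1 0) a := by
  induction w with
  | nil => intro a ha; simpa using ha
  | cons c w ih =>
    intro a ha
    simp only [List.foldl_cons]
    exact ih _ (by cases c <;> simp <;> omega)

lemma one_le_idx (w : List Bool) : 1 ≤ idx w := one_le_foldl w 1 le_rfl

lemma bits_ne_nil {n : ℕ} (h : n ≠ 0) : Nat.bits n ≠ [] := by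
  induction n using Nat.binaryRec' with
  | zero => exact absurd rfl h
  | bit b m hm _ =>
    rw [Nat.bits_append_bit _ _ hm]
    simp

lemma tail_append {α} (l l' : List α) (h : l ≠ []) : (l ++ l').tail = l.tail ++ l' := by
  cases l with
  | nil => exact absurd rfl h
  | cons a l => simp

lemma bin_one : bin 1 = [] := by
  have h := Nat.bit1_bits 0
  simp only [Nat.mul_zero, Nat.zero_add] at h
  simp [bin, h]

lemma bin_bit (m : ℕ) (hm : m ≠ 0) (b : Bool) :
    bin (2 * m + cond b 1 0) = bin m ++ [b] := by
  cases b with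
  | false =>
    have h := Nat.bit0_bits m hm
    simp only [cond, Nat.add_zero]
    rw [bin, bin, h]
    simp only [List.reverse_cons]
    exact tail_append _ _ (by simpa using bits_ne_nil hm)
  | true =>
    have h := Nat.bit1_bits m
    simp only [cond]
    rw [bin, bin, h]
    simp only [List.reverse_cons]
    exact tail_append _ _ (by simpa using bits_ne_nil hm)

lemma bin_idx (w : List Bool) : bin (idx w) = w := by
  induction w using List.reverseRecOn with
  | nil => simpa [idx] using bin_one
  | append_singleton w b ih =>
    rw [idx_append, bin_bit _ (by have := one_le_idx w; omega), ih]

lemma idx_bin {n : ℕ} (h : 1 ≤ n) : idx (bin n) = n := by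
  induction n using Nat.binaryRec' with
  | zero => omega
  | bit b m hm ih =>
    rcases Nat.eq_zero_or_pos m with h0 | h0
    · subst h0
      have : b = true := hm rfl
      subst this
      show idx (bin 1) = 1
      rw [bin_one]; rfl
    · have hb : Nat.bit b m = 2 * m + cond b 1 0 := by
        cases b <;> simp [Nat.bit] <;> omega
      rw [hb, bin_bit m (by omega) b, idx_append, ih (by omega)]

lemma idx_inj {w w' : List Bool} (h : idx w = idx w') : w = w' := by
  rw [← bin_idx w, ← bin_idx w', h]



def nxt (c B num den : ℕ) : ℕ :=
  2 ^ (c+1) * ((max B (den / num) + 1) / 2 ^ (c+1) + 1) + (2 ^ c - 1)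

lemma nxt_mod (c B num den : ℕ) : nxt c B num den % 2 ^ (c+1) = 2 ^ c - 1 := by
  have h1 : 0 < 2 ^ c := Nat.pow_pos (by norm_num)
  have h2 : (2:ℕ) ^ (c+1) = 2 * 2 ^ c := by rw [pow_succ]; ring
  rw [nxt, Nat.mul_add_mod]
  exact Nat.mod_eq_of_lt (by omega)

lemma nxt_gt_max (c B num den : ℕ) : max B (den / num) < nxt c B num den := by
  set b := max B (den / num) with hb
  have h1 := Nat.div_add_mod (b + 1) (2 ^ (c+1))
  have h2 : (b + 1) % 2 ^ (c+1) < 2 ^ (c+1) :=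
    Nat.mod_lt _ (Nat.pow_pos (by norm_num))
  have h3 : 2 ^ (c+1) * ((b + 1) / 2 ^ (c+1) + 1)
      = 2 ^ (c+1) * ((b + 1) / 2 ^ (c+1)) + 2 ^ (c+1) := by ring
  rw [nxt, ← hb, h3]
  omega

lemma nxt_le (c B num den : ℕ) :
    nxt c B num den ≤ max B (den / num) + 1 + 2 ^ (c+2) := by
  set b := max B (den / num) with hb
  have h1 := Nat.div_add_mod (b + 1) (2 ^ (c+1))
  have h3 : 2 ^ (c+1) * ((b + 1) / 2 ^ (c+1) + 1)
      = 2 ^ (c+1) * ((b + 1) / 2 ^ (c+1)) + 2 ^ (c+1) := by ring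
  have h4 : 0 < 2 ^ c := Nat.pow_pos (by norm_num)
  have h5 : (2:ℕ) ^ (c+1) = 2 * 2 ^ c := by rw [pow_succ]; ring
  have h6 : (2:ℕ) ^ (c+2) = 4 * 2 ^ c := by rw [pow_succ, pow_succ]; ring
  rw [nxt, ← hb, h3]
  omega

lemma nxt_ge (c B num den : ℕ) : 2 ^ c - 1 ≤ nxt c B num den :=
  (nxt_mod c B num den) ▸ Nat.mod_le _ _

/-- one step of the chain: state = (last element, numerator, denominator). -/
def stp (c : ℕ) (s : ℕ × ℕ × ℕ) : ℕ × ℕ × ℕ :=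
  (nxt c s.1 s.2.1 s.2.2, s.2.1 * nxt c s.1 s.2.1 s.2.2 - s.2.2,
    s.2.2 * nxt c s.1 s.2.1 s.2.2)

def chS (t : ℕ) (i : ℕ) : ℕ × ℕ × ℕ := (stp (t+2))^[i] (0, 1, 2 ^ (bin t).length)

/-- the chain elements -/
def M (t i : ℕ) : ℕ := (chS t (i+1)).1

lemma chS_succ (t i : ℕ) : chS t (i+1) = stp (t+2) (chS t i) := by
  rw [chS, chS, Function.iterate_succ_apply']

/-- positivity of numerator and denominator -/
lemma chS_pos (t : ℕ) : ∀ i, 0 < (chS t i).2.1 ∧ 0 < (chS t i).2.2 := by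
  intro i
  induction i with
  | zero =>
    refine ⟨by norm_num [chS], ?_⟩
    simp only [chS, Function.iterate_zero, id]
    exact Nat.pow_pos (by norm_num)
  | succ i ih =>
    obtain ⟨h1, h2⟩ := ih
    rw [chS_succ]
    set s := chS t i
    constructor
    · -- num * nxt > den
      have hgt := nxt_gt_max (t+2) s.1 s.2.1 s.2.2
      have hdm := Nat.div_add_mod s.2.2 s.2.1
      have hml : s.2.2 % s.2.1 < s.2.1 := Nat.mod_lt _ h1
      have : s.2.2 < s.2.1 * nxt (t+2) s.1 s.2.1 s.2.2 := by
        calc s.2.2 = s.2.1 * (s.2.2 / s.2.1) + s.2.2 % s.2.1 := (Nat.div_add_mod _ _).symm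
        _ < s.2.1 * (s.2.2 / s.2.1) + s.2.1 := by omega
        _ = s.2.1 * (s.2.2 / s.2.1 + 1) := by ring
        _ ≤ s.2.1 * nxt (t+2) s.1 s.2.1 s.2.2 :=
            Nat.mul_le_mul_left _ (by omega)
      show 0 < s.2.1 * nxt (t+2) s.1 s.2.1 s.2.2 - s.2.2
      omega
    · exact Nat.mul_pos h2 (lt_of_le_of_lt (Nat.zero_le _) (nxt_gt_max _ _ _ _))

/-- den < num * (next element) -/
lemma chS_lt (t i : ℕ) : (chS t i).2.2 < (chS t i).2.1 * M t i := by
  obtain ⟨h1, h2⟩ := chS_pos t i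
  set s := chS t i
  have hgt := nxt_gt_max (t+2) s.1 s.2.1 s.2.2
  have hml : s.2.2 % s.2.1 < s.2.1 := Nat.mod_lt _ h1
  have hM : M t i = nxt (t+2) s.1 s.2.1 s.2.2 := by
    rw [M, chS_succ]; rfl
  rw [hM]
  calc s.2.2 = s.2.1 * (s.2.2 / s.2.1) + s.2.2 % s.2.1 := (Nat.div_add_mod _ _).symm
  _ < s.2.1 * (s.2.2 / s.2.1) + s.2.1 := by omega
  _ = s.2.1 * (s.2.2 / s.2.1 + 1) := by ring
  _ ≤ s.2.1 * nxt (t+2) s.1 s.2.1 s.2.2 := Nat.mul_le_mul_left _ (by omega)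

lemma M_mod (t i : ℕ) : M t i % 2 ^ (t+3) = 2 ^ (t+2) - 1 := by
  have : M t i = nxt (t+2) (chS t i).1 (chS t i).2.1 (chS t i).2.2 := by
    rw [M, chS_succ]; rfl
  rw [this]; exact nxt_mod _ _ _ _

lemma M_ge (t i : ℕ) : 2 ^ (t+2) - 1 ≤ M t i := by
  have : M t i = nxt (t+2) (chS t i).1 (chS t i).2.1 (chS t i).2.2 := by
    rw [M, chS_succ]; rfl
  rw [this]; exact nxt_ge _ _ _ _

lemma M_pos (t i : ℕ) : 0 < M t i := by
  have h := M_ge t i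
  have : (4:ℕ) ≤ 2 ^ (t+2) := by
    calc (4:ℕ) = 2 ^ 2 := by norm_num
    _ ≤ 2 ^ (t+2) := Nat.pow_le_pow_right (by norm_num) (by omega)
  omega

lemma M_lt_succ (t i : ℕ) : M t i < M t (i+1) := by
  have h : M t (i+1) = nxt (t+2) (chS t (i+1)).1 (chS t (i+1)).2.1 (chS t (i+1)).2.2 := by
    rw [M, chS_succ]; rfl
  have h2 : (chS t (i+1)).1 = M t i := rfl
  rw [h]
  calc M t i = (chS t (i+1)).1 := h2.symm
  _ ≤ max (chS t (i+1)).1 ((chS t (i+1)).2.2 / (chS t (i+1)).2.1) := le_max_left _ _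
  _ < _ := nxt_gt_max _ _ _ _

lemma M_strictMono (t : ℕ) : StrictMono (M t) :=
  strictMono_nat_of_lt_succ (M_lt_succ t)

lemma lt_M (t i : ℕ) : i < M t i := by
  induction i with
  | zero => exact M_pos t 0
  | succ i ih => have := M_lt_succ t i; omega



/-! ### rational bookkeeping -/

/-- the remainder after `i` steps of the chain, as a rational -/
def q (t i : ℕ) : ℚ := ((chS t i).2.1 : ℚ) / ((chS t i).2.2 : ℚ)

lemma q_zero (t : ℕ) : q t 0 = ((2:ℚ) ^ (bin t).length)⁻¹ := by
  simp [q, chS]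

lemma q_pos (t i : ℕ) : 0 < q t i := by
  obtain ⟨h1, h2⟩ := chS_pos t i
  exact div_pos (by exact_mod_cast h1) (by exact_mod_cast h2)

lemma q_succ (t i : ℕ) : q t (i+1) = q t i - ((M t i : ℚ))⁻¹ := by
  obtain ⟨h1, h2⟩ := chS_pos t i
  have hlt := chS_lt t i
  have hM : M t i = nxt (t+2) (chS t i).1 (chS t i).2.1 (chS t i).2.2 := by
    rw [M, chS_succ]; rfl
  have hMpos := M_pos t i
  have e1 : (chS t (i+1)).2.1 = (chS t i).2.1 * M t i - (chS t i).2.2 := by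
    rw [chS_succ, hM]; rfl
  have e2 : (chS t (i+1)).2.2 = (chS t i).2.2 * M t i := by
    rw [chS_succ, hM]; rfl
  rw [q, q, e1, e2]
  have hc : ((chS t i).2.1 * M t i - (chS t i).2.2 : ℕ) = ((chS t i).2.1 * M t i : ℕ) - ((chS t i).2.2:ℕ) := rfl
  rw [Nat.cast_sub (le_of_lt hlt)]
  have hd : ((chS t i).2.2 : ℚ) ≠ 0 := by exact_mod_cast h2.ne'
  have hm : ((M t i : ℚ)) ≠ 0 := by exact_mod_cast hMpos.ne'
  push_cast
  field_simp

lemma sum_M_eq (t i : ℕ) :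
    ∑ j ∈ Finset.range i, ((M t j : ℚ))⁻¹ = q t 0 - q t i := by
  induction i with
  | zero => simp
  | succ i ih => rw [Finset.sum_range_succ, ih, q_succ]; ring

lemma q_antitone (t : ℕ) {i j : ℕ} (h : i ≤ j) : q t j ≤ q t i := by
  induction j with
  | zero => simp_all
  | succ j ih =>
    rcases Nat.lt_or_ge i (j+1) with h' | h'
    · have := ih (by omega)
      have hstep : q t (j+1) ≤ q t j := by
        rw [q_succ]
        have : (0:ℚ) < ((M t j : ℚ))⁻¹ := by
          have := M_pos t j
          positivity
        linarith
      linarith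
    · have : i = j + 1 := by omega
      simp [this]

/-- the remainders tend to zero -/
lemma q_conv (t : ℕ) (ε : ℚ) (hε : 0 < ε) : ∃ i, q t i < ε := by
  by_contra hcon
  push_neg at hcon
  -- all remainders at least ε
  set Kε := ⌈ε⁻¹⌉₊ with hK
  have hdivle : ∀ i, (chS t i).2.2 / (chS t i).2.1 ≤ Kε := by
    intro i
    obtain ⟨h1, h2⟩ := chS_pos t i
    have hq := hcon i
    have h3 : ((chS t i).2.2 / (chS t i).2.1 : ℕ) ≤ ((chS t i).2.2 : ℚ) / ((chS t i).2.1 : ℚ) :=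
      Nat.cast_div_le
    have h4 : ((chS t i).2.2 : ℚ) / ((chS t i).2.1 : ℚ) = (q t i)⁻¹ := by
      rw [q, inv_div]
    have h5 : (q t i)⁻¹ ≤ ε⁻¹ := inv_anti₀ hε hq
    have h6 : (ε⁻¹ : ℚ) ≤ Kε := Nat.le_ceil _
    have h7 : (((chS t i).2.2 / (chS t i).2.1 : ℕ) : ℚ) ≤ (Kε : ℚ) := by
      rw [h4] at h3; linarith
    exact_mod_cast h7
  -- M grows at most linearly
  set D := Kε + 1 + 2 ^ (t+4) with hD
  set A := M t 0 + D with hA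
  have hMle : ∀ i, M t i ≤ A + i * D := by
    intro i
    induction i with
    | zero =>
      have h0 : A + 0 * D = M t 0 + D := by rw [hA]; ring
      rw [h0]
      exact Nat.le_add_right _ _
    | succ i ih =>
      have h : M t (i+1) = nxt (t+2) (chS t (i+1)).1 (chS t (i+1)).2.1 (chS t (i+1)).2.2 := by
        rw [M, chS_succ]; rfl
      have h2 : (chS t (i+1)).1 = M t i := rfl
      have h3 := nxt_le (t+2) (chS t (i+1)).1 (chS t (i+1)).2.1 (chS t (i+1)).2.2
      rw [h2] at h3
      have h4 := hdivle (i+1)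
      have h5 : max (M t i) ((chS t (i+1)).2.2 / (chS t (i+1)).2.1) ≤ max (M t i) Kε :=
        max_le_max le_rfl h4
      have h6 : max (M t i) Kε ≤ M t i + Kε := by omega
      have : M t (i+1) ≤ M t i + Kε + 1 + 2 ^ (t+4) := by
        rw [h]
        calc nxt (t+2) (chS t (i+1)).1 (chS t (i+1)).2.1 (chS t (i+1)).2.2
            ≤ max (M t i) ((chS t (i+1)).2.2 / (chS t (i+1)).2.1) + 1 + 2 ^ ((t+2)+2) := by
              rw [← h2]; exact h3
        _ ≤ M t i + Kε + 1 + 2 ^ (t+4) := by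
              have : (t+2)+2 = t+4 := by omega
              rw [this]; omega
      have hsucc : (i+1) * D = i * D + D := by ring
      omega
  -- harmonic comparison
  have hterm : ∀ j : ℕ, (1 : ℚ) / ((A + D : ℚ) * (j+1)) ≤ ((M t j : ℚ))⁻¹ := by
    intro j
    have h1 : (M t j : ℚ) ≤ (A + D) * (j+1) := by
      have h2 := hMle j
      have h3 : (M t j : ℚ) ≤ A + j * D := by exact_mod_cast h2
      have hA0 : (0:ℚ) ≤ A := Nat.cast_nonneg _
      have hD0 : (0:ℚ) ≤ D := Nat.cast_nonneg _
      nlinarith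
    have hMq : (0:ℚ) < (M t j : ℚ) := by exact_mod_cast M_pos t j
    rw [one_div]
    exact inv_anti₀ hMq h1
  have hbound : ∀ i, ∑ j ∈ Finset.range i, (1:ℚ)/(j+1) ≤ (A + D) * q t 0 := by
    intro i
    have h1 : ∑ j ∈ Finset.range i, ((M t j:ℚ))⁻¹ ≤ q t 0 := by
      rw [sum_M_eq]
      have := q_pos t i
      linarith
    have h2 : ∑ j ∈ Finset.range i, (1:ℚ)/((A + D : ℚ) * (j+1))
        ≤ ∑ j ∈ Finset.range i, ((M t j:ℚ))⁻¹ :=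
      Finset.sum_le_sum fun j _ => hterm j
    have hAD : (0:ℚ) < (A + D : ℚ) := by
      have : 0 < D := by
        have : 0 < 2^(t+4) := Nat.pow_pos (by norm_num)
        omega
      exact_mod_cast Nat.add_pos_right A this
    have h3 : ∑ j ∈ Finset.range i, (1:ℚ)/((A + D : ℚ) * (j+1))
        = ((A:ℚ)+(D:ℚ))⁻¹ * ∑ j ∈ Finset.range i, (1:ℚ)/(j+1) := by
      rw [Finset.mul_sum]
      refine Finset.sum_congr rfl fun j _ => ?_
      rw [one_div, one_div, mul_inv]
    rw [h3] at h2
    have h4 : ((A:ℚ)+(D:ℚ))⁻¹ * ∑ j ∈ Finset.range i, (1:ℚ)/(j+1) ≤ q t 0 := le_trans h2 h1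
    calc ∑ j ∈ Finset.range i, (1:ℚ)/(j+1)
        = ((A:ℚ)+(D:ℚ)) * (((A:ℚ)+(D:ℚ))⁻¹ * ∑ j ∈ Finset.range i, (1:ℚ)/(j+1)) := by
          rw [← mul_assoc, mul_inv_cancel₀ (ne_of_gt hAD), one_mul]
    _ ≤ ((A:ℚ)+(D:ℚ)) * q t 0 := by
          exact mul_le_mul_of_nonneg_left h4 (le_of_lt hAD)
  -- contradiction with divergence of harmonic series
  have hdiv := Real.tendsto_sum_range_one_div_nat_succ_atTop
  have hev := hdiv.eventually (Filter.eventually_gt_atTop ((((A:ℚ)+(D:ℚ)) * q t 0 : ℚ) : ℝ))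
  obtain ⟨i, hi⟩ := hev.exists
  have hle : ∑ j ∈ Finset.range i, (1:ℝ)/(j+1) ≤ ((((A:ℚ)+(D:ℚ)) * q t 0 : ℚ) : ℝ) := by
    calc ∑ j ∈ Finset.range i, (1:ℝ)/(j+1)
        = ((∑ j ∈ Finset.range i, (1:ℚ)/(j+1) : ℚ) : ℝ) := by push_cast; rfl
    _ ≤ _ := by exact_mod_cast hbound i
  linarith

/-! ### the chain sums in `ℝ≥0∞` -/

open scoped ENNReal

lemma coe_inv_eq_ofReal {m : ℕ} (hm : 0 < m) :
    ((m : ℝ≥0∞))⁻¹ = ENNReal.ofReal ((m:ℝ))⁻¹ := by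
  rw [ENNReal.ofReal_inv_of_pos (by exact_mod_cast hm), ENNReal.ofReal_natCast]

lemma ofReal_q_zero (t : ℕ) :
    ENNReal.ofReal ((q t 0 : ℝ)) = (2 : ℝ≥0∞)⁻¹ ^ (bin t).length := by
  rw [q_zero]
  have h1 : (((((2:ℚ) ^ (bin t).length)⁻¹ : ℚ)) : ℝ) = ((2:ℝ) ^ (bin t).length)⁻¹ := by
    push_cast; rfl
  rw [h1, ENNReal.ofReal_inv_of_pos (by positivity), ENNReal.ofReal_pow (by norm_num),
    ENNReal.ofReal_ofNat, ← ENNReal.inv_pow]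

lemma chain_tsum (t : ℕ) :
    ∑' i, ((M t i : ℝ≥0∞))⁻¹ = (2 : ℝ≥0∞)⁻¹ ^ (bin t).length := by
  rw [ENNReal.tsum_eq_iSup_nat]
  have hfin : ∀ i, ∑ j ∈ Finset.range i, ((M t j : ℝ≥0∞))⁻¹
      = ENNReal.ofReal ((q t 0 : ℝ) - (q t i : ℝ)) := by
    intro i
    have h1 : ∀ j ∈ Finset.range i, ((M t j : ℝ≥0∞))⁻¹
        = ENNReal.ofReal (((M t j : ℝ))⁻¹) := fun j _ => coe_inv_eq_ofReal (M_pos t j)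
    rw [Finset.sum_congr rfl h1,
      ← ENNReal.ofReal_sum_of_nonneg (fun j _ => by positivity)]
    congr 1
    have h2 := sum_M_eq t i
    have h3 : ((∑ j ∈ Finset.range i, ((M t j : ℚ))⁻¹ : ℚ) : ℝ)
        = ∑ j ∈ Finset.range i, ((M t j : ℝ))⁻¹ := by push_cast; rfl
    rw [← h3, h2]
    push_cast
    ring
  rw [iSup_congr hfin, ← ofReal_q_zero t]
  apply le_antisymm
  · refine iSup_le fun i => ENNReal.ofReal_le_ofReal ?_
    have := q_pos t i
    have h0 : (0:ℝ) < (q t i : ℝ) := by exact_mod_cast this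
    linarith
  · apply ENNReal.le_of_forall_pos_le_add
    intro ε hε _
    have hε' : (0:ℝ) < (ε:ℝ) := hε
    obtain ⟨ρ, hρ0, hρε⟩ := exists_rat_btwn hε'
    have hρ0' : (0:ℚ) < ρ := by exact_mod_cast hρ0
    obtain ⟨i, hi⟩ := q_conv t ρ hρ0'
    have key : ENNReal.ofReal ((q t 0 : ℝ))
        ≤ ENNReal.ofReal ((q t 0 : ℝ) - (q t i : ℝ)) + ENNReal.ofReal ((q t i : ℝ)) := by
      rw [← ENNReal.ofReal_add]
      · apply ENNReal.ofReal_le_ofReal; linarith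
      · have h1 := q_pos t i
        have h2 := q_antitone t (Nat.zero_le i)
        have h1' : (0:ℝ) < (q t i : ℝ) := by exact_mod_cast h1
        have h2' : (q t i : ℝ) ≤ (q t 0 : ℝ) := by exact_mod_cast h2
        linarith
      · have h1 := q_pos t i
        have h1' : (0:ℝ) < (q t i : ℝ) := by exact_mod_cast h1
        linarith
    refine le_trans key (add_le_add ?_ ?_)
    · exact le_iSup (fun i => ENNReal.ofReal ((q t 0 : ℝ) - (q t i : ℝ))) i
    · have h1 : (q t i : ℝ) ≤ (ε : ℝ) := by
        have : (q t i : ℝ) < (ρ : ℝ) := by exact_mod_cast hi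
        linarith
      calc ENNReal.ofReal ((q t i : ℝ)) ≤ ENNReal.ofReal ((ε:ℝ)) :=
            ENNReal.ofReal_le_ofReal h1
      _ = (ε : ℝ≥0∞) := ENNReal.ofReal_coe_nnreal


/-! ### disjointness of the chains, and the selector -/

lemma M_plus_one_mod (t i : ℕ) : (M t i + 1) % 2 ^ (t+3) = 2 ^ (t+2) := by
  have h := M_mod t i
  have h1 : 0 < 2 ^ (t+2) := Nat.pow_pos (by norm_num)
  have h2 : (2:ℕ) ^ (t+3) = 2 * 2 ^ (t+2) := by rw [pow_succ]; ring
  have h3 := Nat.div_add_mod (M t i) (2 ^ (t+3))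
  rw [h] at h3
  have h4 : M t i + 1 = 2 ^ (t+3) * (M t i / 2 ^ (t+3)) + 2 ^ (t+2) := by omega
  rw [h4, Nat.mul_add_mod]
  exact Nat.mod_eq_of_lt (by omega)

lemma M_ne_of_lt {t t' i i' : ℕ} (hlt : t < t') : M t i ≠ M t' i' := by
  intro h
  have ha := M_plus_one_mod t i
  have hb := M_plus_one_mod t' i'
  rw [h] at ha
  set x := M t' i' + 1 with hx
  have h3 := Nat.div_add_mod x (2 ^ (t'+3))
  rw [hb] at h3
  have hd1 : (2:ℕ)^(t+3) ∣ 2^(t'+2) := pow_dvd_pow 2 (by omega)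
  have hd2 : (2:ℕ)^(t+3) ∣ 2^(t'+3) := pow_dvd_pow 2 (by omega)
  have hdvd : (2:ℕ)^(t+3) ∣ x := by
    have : x = 2 ^ (t'+3) * (x / 2 ^ (t'+3)) + 2 ^ (t'+2) := by omega
    rw [this]
    exact dvd_add (hd2.mul_right _) hd1
  have h0 : x % 2 ^ (t+3) = 0 := Nat.eq_zero_of_dvd_of_lt ((Nat.dvd_mod_iff dvd_rfl).mpr hdvd) (Nat.mod_lt _ (Nat.pow_pos (by norm_num)))
  have h5 : 0 < 2 ^ (t+2) := Nat.pow_pos (by norm_num)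
  omega

lemma M_inj {t t' i i' : ℕ} (h : M t i = M t' i') : t = t' ∧ i = i' := by
  have ht : t = t' := by
    rcases Nat.lt_trichotomy t t' with hlt | heq | hgt
    · exact absurd h (M_ne_of_lt hlt)
    · exact heq
    · exact absurd h.symm (M_ne_of_lt hgt)
  subst ht
  exact ⟨rfl, (M_strictMono t).injective h⟩


def isIn (n t : ℕ) : Bool :=
  decide (0 < t) && (((List.range (n+1)).map (M t)).idxOf n != n + 1)

lemma isIn_iff {n t : ℕ} : isIn n t = true ↔ 0 < t ∧ ∃ i, M t i = n := by
  rw [isIn, Bool.and_eq_true, decide_eq_true_eq, bne_iff_ne]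
  constructor
  · rintro ⟨h1, h2⟩
    refine ⟨h1, ?_⟩
    have hlen : ((List.range (n+1)).map (M t)).length = n+1 := by simp
    have hmem : n ∈ (List.range (n+1)).map (M t) := by
      by_contra hn
      exact h2 (by rw [List.idxOf_eq_length hn, hlen])
    obtain ⟨i, _, hMi⟩ := List.mem_map.1 hmem
    exact ⟨i, hMi⟩
  · rintro ⟨h1, i, hi⟩
    refine ⟨h1, ?_⟩
    have hmem : n ∈ (List.range (n+1)).map (M t) := by
      refine List.mem_map.2 ⟨i, List.mem_range.2 ?_, hi⟩
      have := lt_M t i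
      omega
    intro hc
    have hlt := List.idxOf_lt_length_iff.2 hmem
    rw [hc] at hlt
    simp at hlt

lemma isIn_lt {n t : ℕ} (h : isIn n t = true) : t < n + 1 := by
  obtain ⟨h1, i, hi⟩ := isIn_iff.1 h
  have h2 := M_ge t i
  have h3 : t + 2 < 2 ^ (t+2) := Nat.lt_two_pow_self
  omega

lemma isIn_unique {n t t' : ℕ} (h : isIn n t = true) (h' : isIn n t' = true) : t = t' := by
  obtain ⟨_, i, hi⟩ := isIn_iff.1 h
  obtain ⟨_, i', hi'⟩ := isIn_iff.1 h'
  exact (M_inj (hi.trans hi'.symm)).1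

def sel (n : ℕ) : Option ℕ := (List.range (n+1))[(List.range (n+1)).findIdx (isIn n)]?

lemma sel_eq_some_iff {n t : ℕ} : sel n = some t ↔ isIn n t = true := by
  constructor
  · intro h
    exact List.findIdx_of_getElem?_eq_some h
  · intro h
    have hmem : ∃ x ∈ List.range (n+1), isIn n x = true :=
      ⟨t, List.mem_range.2 (isIn_lt h), h⟩
    have hlt := List.findIdx_lt_length_of_exists hmem
    have hsel : sel n = some ((List.range (n+1))[(List.range (n+1)).findIdx (isIn n)]) :=
      List.getElem?_eq_getElem hlt
    have hpj : isIn n ((List.range (n+1))[(List.range (n+1)).findIdx (isIn n)]) = true :=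
      List.findIdx_getElem (w := hlt)
    rw [hsel, isIn_unique h hpj]

/-- The tuatara machine associated to `C`. -/
def Vm (C : List Bool →. List Bool) : List Bool →. List Bool :=
  fun w => (Part.ofOption (sel (idx w))).bind fun t => C (bin t)

lemma Vm_dom (C : List Bool →. List Bool) (w : List Bool) :
    (Vm C w).Dom ↔ ∃ t, sel (idx w) = some t ∧ (C (bin t)).Dom := by
  cases h : sel (idx w) with
  | none => simp [Vm, h]
  | some t => simp [Vm, h]


/-! ### Kraft's inequality -/

def val (w : List Bool) : ℕ := w.foldl (fun a b => 2 * a + cond b 1 0) 0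

lemma val_append_singleton (w : List Bool) (b : Bool) :
    val (w ++ [b]) = 2 * val w + cond b 1 0 := by
  simp [val, List.foldl_append]

lemma val_lt (w : List Bool) : val w < 2 ^ w.length := by
  induction w using List.reverseRecOn with
  | nil => simp [val]
  | append_singleton w b ih =>
    rw [val_append_singleton]
    simp only [List.length_append, List.length_cons, List.length_nil, pow_add, pow_one]
    cases b <;> simp <;> omega

lemma val_append (u v : List Bool) : val (u ++ v) = val u * 2 ^ v.length + val v := by
  induction v using List.reverseRecOn with
  | nil => simp [val]
  | append_singleton v b ih =>
    rw [← List.append_assoc, val_append_singleton, ih, val_append_singleton]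
    simp only [List.length_append, List.length_cons, List.length_nil, pow_add, pow_one]
    ring

lemma val_inj : ∀ (w w' : List Bool), w.length = w'.length → val w = val w' → w = w' := by
  intro w
  induction w using List.reverseRecOn with
  | nil =>
    intro w' h _
    cases w' using List.reverseRecOn with
    | nil => rfl
    | append_singleton w' b => simp at h
  | append_singleton w b ih =>
    intro w' h hv
    cases w' using List.reverseRecOn with
    | nil => simp at h
    | append_singleton w' b' =>
      rw [val_append_singleton, val_append_singleton] at hv
      simp only [List.length_append, List.length_cons, List.length_nil] at h
      have hb : b = b' := by
        cases b <;> cases b' <;> simp at hv ⊢ <;> omega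
      subst hb
      have : val w = val w' := by cases b <;> simp at hv <;> omega
      rw [ih w' (by omega) this]

lemma val_take (w : List Bool) (j : ℕ) (hj : j ≤ w.length) :
    val (w.take j) = val w / 2 ^ (w.length - j) := by
  have hsplit : w = w.take j ++ w.drop j := (List.take_append_drop j w).symm
  have hlen : (w.drop j).length = w.length - j := List.length_drop
  have h := val_append (w.take j) (w.drop j)
  rw [← hsplit, hlen] at h
  rw [h]
  have hvlt : val (w.drop j) < 2 ^ (w.length - j) := hlen ▸ val_lt (w.drop j)
  rw [mul_comm, Nat.mul_add_div (Nat.pow_pos (by norm_num)),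
    Nat.div_eq_of_lt hvlt, Nat.add_zero]


lemma interval_prefix {p q : List Bool} {L x : ℕ} (hpL : p.length ≤ L) (hqL : q.length ≤ L)
    (hlen : p.length ≤ q.length)
    (hxp1 : val p * 2 ^ (L - p.length) ≤ x)
    (hxp2 : x < val p * 2 ^ (L - p.length) + 2 ^ (L - p.length))
    (hxq1 : val q * 2 ^ (L - q.length) ≤ x)
    (hxq2 : x < val q * 2 ^ (L - q.length) + 2 ^ (L - q.length)) :
    p <+: q := by
  have ha : x / 2 ^ (L - p.length) = val p :=
    Nat.div_eq_of_lt_le hxp1 (by rw [Nat.succ_mul]; omega)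
  have hb : x / 2 ^ (L - q.length) = val q :=
    Nat.div_eq_of_lt_le hxq1 (by rw [Nat.succ_mul]; omega)
  have hkey : val (q.take p.length) = val p := by
    rw [val_take q p.length hlen, ← hb, Nat.div_div_eq_div_mul, ← pow_add, ← ha]
    congr 2
    omega
  have hlen' : (q.take p.length).length = p.length := by
    rw [List.length_take]; omega
  have := val_inj _ _ hlen' hkey
  rw [← this]
  exact List.take_prefix _ _

lemma kraft_nat {F : Finset (List Bool)}
    (hpf : ∀ p ∈ F, ∀ q ∈ F, p <+: q → p = q) (L : ℕ) (hL : ∀ p ∈ F, p.length ≤ L) :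
    ∑ p ∈ F, 2 ^ (L - p.length) ≤ 2 ^ L := by
  classical
  set S : List Bool → Finset ℕ := fun p =>
    Finset.Ico (val p * 2 ^ (L - p.length)) (val p * 2 ^ (L - p.length) + 2 ^ (L - p.length))
    with hS
  have hcard : ∀ p, (S p).card = 2 ^ (L - p.length) := by
    intro p; rw [hS]; simp
  have hsub : ∀ p ∈ F, S p ⊆ Finset.range (2 ^ L) := by
    intro p hp x hx
    rw [hS] at hx
    simp only [Finset.mem_Ico] at hx
    rw [Finset.mem_range]
    have h1 : val p + 1 ≤ 2 ^ p.length := val_lt p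
    have h2 : (val p + 1) * 2 ^ (L - p.length) ≤ 2 ^ p.length * 2 ^ (L - p.length) :=
      Nat.mul_le_mul_right _ h1
    have h3 : (2:ℕ) ^ p.length * 2 ^ (L - p.length) = 2 ^ L := by
      rw [← pow_add]; congr 1; exact Nat.add_sub_cancel' (hL p hp)
    have h4 : (val p + 1) * 2 ^ (L - p.length)
        = val p * 2 ^ (L - p.length) + 2 ^ (L - p.length) := by ring
    omega
  have hdisj : ∀ p ∈ F, ∀ q ∈ F, p ≠ q → Disjoint (S p) (S q) := by
    intro p hp q hq hne
    rw [Finset.disjoint_left]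
    intro x hxp hxq
    rw [hS] at hxp hxq
    simp only [Finset.mem_Ico] at hxp hxq
    rcases Nat.le_total p.length q.length with hl | hl
    · exact hne (hpf p hp q hq
        (interval_prefix (hL p hp) (hL q hq) hl hxp.1 hxp.2 hxq.1 hxq.2))
    · exact hne ((hpf q hq p hp
        (interval_prefix (hL q hq) (hL p hp) hl hxq.1 hxq.2 hxp.1 hxp.2)).symm)
  calc ∑ p ∈ F, 2 ^ (L - p.length) = ∑ p ∈ F, (S p).card :=
        Finset.sum_congr rfl fun p _ => (hcard p).symm
  _ = (F.biUnion S).card := (Finset.card_biUnion hdisj).symm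
  _ ≤ (Finset.range (2 ^ L)).card := Finset.card_le_card (Finset.biUnion_subset.2 hsub)
  _ = 2 ^ L := by simp

lemma kraft_fin {F : Finset (List Bool)}
    (hpf : ∀ p ∈ F, ∀ q ∈ F, p <+: q → p = q) :
    ∑ p ∈ F, (2:ℝ≥0∞)⁻¹ ^ p.length ≤ 1 := by
  set L := F.sup List.length with hLdef
  have hL : ∀ p ∈ F, p.length ≤ L := fun p hp => Finset.le_sup hp
  have hnat := kraft_nat hpf L hL
  have h2L : ((2:ℝ≥0∞))^L ≠ 0 := pow_ne_zero _ (by norm_num)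
  have h2L' : ((2:ℝ≥0∞))^L ≠ ⊤ := ENNReal.pow_ne_top (by norm_num)
  rw [← ENNReal.mul_le_mul_iff_left h2L h2L', one_mul, Finset.sum_mul]
  have key : ∀ p ∈ F, (2:ℝ≥0∞)⁻¹ ^ p.length * 2^L = (2:ℝ≥0∞) ^ (L - p.length) := by
    intro p hp
    have h1 : (2:ℝ≥0∞)^L = 2 ^ p.length * 2 ^ (L - p.length) := by
      rw [← pow_add]; congr 1; exact (Nat.add_sub_cancel' (hL p hp)).symm
    rw [h1, ← mul_assoc, ← mul_pow, ENNReal.inv_mul_cancel (by norm_num) (by norm_num),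
      one_pow, one_mul]
  calc ∑ p ∈ F, (2:ℝ≥0∞)⁻¹ ^ p.length * 2^L = ∑ p ∈ F, (2:ℝ≥0∞) ^ (L - p.length) :=
        Finset.sum_congr rfl key
  _ = (((∑ p ∈ F, 2 ^ (L - p.length) : ℕ)) : ℝ≥0∞) := by push_cast; rfl
  _ ≤ (((2 ^ L : ℕ)) : ℝ≥0∞) := by exact_mod_cast Nat.cast_le.2 hnat
  _ = (2:ℝ≥0∞) ^ L := by push_cast; rfl

lemma Omega_le_one {C : List Bool →. List Bool} (hsd : SelfDelim C) : Omega C ≤ 1 := by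
  rw [Omega, ENNReal.tsum_eq_iSup_sum]
  refine iSup_le fun s => ?_
  classical
  have himg : ∑ x ∈ s, (2:ℝ≥0∞)⁻¹ ^ (x : List Bool).length
      = ∑ p ∈ s.image Subtype.val, (2:ℝ≥0∞)⁻¹ ^ p.length := by
    rw [Finset.sum_image]
    intro x _ y _ h
    exact Subtype.val_injective h
  rw [himg]
  apply kraft_fin
  intro p hp q hq hpq
  obtain ⟨⟨p', hp'⟩, _, rfl⟩ := Finset.mem_image.1 hp
  obtain ⟨⟨q', hq'⟩, _, rfl⟩ := Finset.mem_image.1 hq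
  exact hsd _ hp' _ hq' hpq


/-! ### computation of the zeta number of `Vm C` -/

lemma mem_Ups_iff {C : List Bool →. List Bool} {n : ℕ} :
    n ∈ Ups (dom (Vm C)) ↔ ∃ t i, 0 < t ∧ M t i = n ∧ bin t ∈ dom C := by
  constructor
  · rintro ⟨h1, h2⟩
    rw [dom, Set.mem_setOf_eq, Vm_dom] at h2
    obtain ⟨t, hsel, hdomC⟩ := h2
    rw [idx_bin h1] at hsel
    obtain ⟨h0, i, hMi⟩ := isIn_iff.1 (sel_eq_some_iff.1 hsel)
    exact ⟨t, i, h0, hMi, hdomC⟩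
  · rintro ⟨t, i, h0, hM, hdomC⟩
    have h1 : 1 ≤ n := hM ▸ M_pos t i
    refine ⟨h1, ?_⟩
    rw [dom, Set.mem_setOf_eq, Vm_dom]
    refine ⟨t, ?_, hdomC⟩
    rw [idx_bin h1]
    exact sel_eq_some_iff.2 (isIn_iff.2 ⟨h0, i, hM⟩)

noncomputable def eqv (C : List Bool →. List Bool) :
    (Σ _p : ↥(dom C), ℕ) ≃ ↥(Ups (dom (Vm C))) :=
  Equiv.ofBijective
    (fun a => ⟨M (idx a.1.val) a.2,
      mem_Ups_iff.2 ⟨idx a.1.val, a.2, one_le_idx _, rfl, by rw [bin_idx]; exact a.1.property⟩⟩)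
    (by
      constructor
      · rintro ⟨⟨p, hp⟩, i⟩ ⟨⟨p', hp'⟩, i'⟩ h
        rw [Subtype.mk.injEq] at h
        obtain ⟨ht, hi⟩ := M_inj h
        have : p = p' := idx_inj ht
        subst this; subst hi; rfl
      · rintro ⟨n, hn⟩
        obtain ⟨t, i, h0, hM, hdomC⟩ := mem_Ups_iff.1 hn
        refine ⟨⟨⟨bin t, hdomC⟩, i⟩, ?_⟩
        rw [Subtype.mk.injEq]
        rw [idx_bin h0, hM])

lemma zeta_Vm (C : List Bool →. List Bool) : zeta (Vm C) = Omega C := by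
  rw [zeta, Omega, ← Equiv.tsum_eq (eqv C) (fun x => (((x : ℕ)) : ℝ≥0∞)⁻¹)]
  have h1 : ∀ a : (Σ _p : ↥(dom C), ℕ),
      ((((eqv C a) : ℕ)) : ℝ≥0∞)⁻¹ = ((M (idx a.1.val) a.2 : ℕ) : ℝ≥0∞)⁻¹ := fun a => rfl
  rw [tsum_congr h1, ENNReal.tsum_sigma']
  exact tsum_congr fun p => by rw [chain_tsum (idx p.val), bin_idx]


/-! ### computability -/

lemma primrec_idx : Primrec idx := by
  have hstep : Primrec (fun p : ℕ × Bool => 2 * p.1 + cond p.2 1 0) :=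
    Primrec.nat_add.comp (Primrec.nat_mul.comp (Primrec.const 2) Primrec.fst)
      (Primrec.cond Primrec.snd (Primrec.const 1) (Primrec.const 0))
  exact (Primrec.list_foldl Primrec.id (Primrec.const 1)
    ((hstep.comp Primrec.snd).to₂)).of_eq (fun w => rfl)

lemma primrec_pow : Primrec₂ ((· ^ ·) : ℕ → ℕ → ℕ) :=
  Primrec₂.unpaired'.1 Nat.Primrec.pow

def mbF : ℕ × List Bool → ℕ × List Bool := fun s =>
  if s.1 = 0 then s else (s.1 / 2, s.2 ++ [decide (s.1 % 2 = 1)])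

lemma primrec_mbF : Primrec mbF := by
  refine Primrec.ite (Primrec.eq.comp Primrec.fst (Primrec.const 0)) Primrec.id
    (Primrec.pair (Primrec.nat_div.comp Primrec.fst (Primrec.const 2))
      (Primrec.list_concat.comp Primrec.snd
        (Primrec.eq.comp (Primrec.nat_mod.comp Primrec.fst (Primrec.const 2))
          (Primrec.const 1)).decide))

lemma bits_cons (m : ℕ) (hm : m ≠ 0) :
    Nat.bits m = decide (m % 2 = 1) :: Nat.bits (m / 2) := by
  rcases Nat.even_or_odd m with he | ho
  · obtain ⟨r, hr⟩ := he
    have hr2 : m = 2 * r := by omega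
    have hrne : r ≠ 0 := by omega
    subst hr2
    rw [Nat.bit0_bits _ hrne]
    have h1 : 2 * r % 2 = 0 := by omega
    have h2 : 2 * r / 2 = r := by omega
    rw [h1, h2]
    simp
  · obtain ⟨r, hr⟩ := ho
    subst hr
    rw [Nat.bit1_bits]
    have h1 : (2 * r + 1) % 2 = 1 := by omega
    have h2 : (2 * r + 1) / 2 = r := by omega
    rw [h1, h2]
    simp

lemma mbF_iter : ∀ (fuel m : ℕ) (acc : List Bool), m ≤ fuel →
    (mbF^[fuel] (m, acc)).2 = acc ++ Nat.bits m := by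
  intro fuel
  induction fuel with
  | zero =>
    intro m acc h
    have : m = 0 := by omega
    subst this
    simp [Nat.zero_bits]
  | succ fuel ih =>
    intro m acc h
    rw [Function.iterate_succ_apply]
    by_cases hm : m = 0
    · subst hm
      have h1 : mbF (0, acc) = (0, acc) := by simp [mbF]
      rw [h1, ih 0 acc (Nat.zero_le _)]
    · have h1 : mbF (m, acc) = (m / 2, acc ++ [decide (m % 2 = 1)]) := by
        simp [mbF, hm]
      rw [h1, ih (m/2) _ (by omega), bits_cons m hm, List.append_assoc]
      rfl

def binImpl (n : ℕ) : List Bool := ((mbF^[n] (n, [])).2).reverse.tail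

lemma binImpl_eq : binImpl = bin :=
  funext fun n => by rw [binImpl, mbF_iter n n [] le_rfl, List.nil_append]; rfl

lemma primrec_bin : Primrec bin := by
  rw [← binImpl_eq]
  have hiter : Primrec (fun n => mbF^[n] (n, ([] : List Bool))) :=
    Primrec.nat_iterate Primrec.id (Primrec.pair Primrec.id (Primrec.const []))
      ((primrec_mbF.comp Primrec.snd).to₂)
  exact Primrec.list_tail.comp (Primrec.list_reverse.comp (Primrec.snd.comp hiter))

lemma primrec_stp : Primrec (fun p : ℕ × (ℕ × ℕ × ℕ) => stp (p.1 + 2) p.2) := by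
  have hc : Primrec (fun p : ℕ × (ℕ × ℕ × ℕ) => p.1 + 2) :=
    Primrec.nat_add.comp Primrec.fst (Primrec.const 2)
  have hB : Primrec (fun p : ℕ × (ℕ × ℕ × ℕ) => p.2.1) := Primrec.fst.comp Primrec.snd
  have hnum : Primrec (fun p : ℕ × (ℕ × ℕ × ℕ) => p.2.2.1) :=
    Primrec.fst.comp (Primrec.snd.comp Primrec.snd)
  have hden : Primrec (fun p : ℕ × (ℕ × ℕ × ℕ) => p.2.2.2) :=
    Primrec.snd.comp (Primrec.snd.comp Primrec.snd)
  have hpow1 : Primrec (fun p : ℕ × (ℕ × ℕ × ℕ) => 2 ^ (p.1 + 2 + 1)) :=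
    primrec_pow.comp (Primrec.const 2) (Primrec.nat_add.comp hc (Primrec.const 1))
  have hpow0 : Primrec (fun p : ℕ × (ℕ × ℕ × ℕ) => 2 ^ (p.1 + 2)) :=
    primrec_pow.comp (Primrec.const 2) hc
  have hb : Primrec (fun p : ℕ × (ℕ × ℕ × ℕ) => max p.2.1 (p.2.2.2 / p.2.2.1)) :=
    Primrec.nat_max.comp hB (Primrec.nat_div.comp hden hnum)
  have hx : Primrec (fun p : ℕ × (ℕ × ℕ × ℕ) => nxt (p.1+2) p.2.1 p.2.2.1 p.2.2.2) := by
    have h1 : Primrec (fun p : ℕ × (ℕ × ℕ × ℕ) =>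
        2 ^ (p.1 + 2 + 1) * ((max p.2.1 (p.2.2.2 / p.2.2.1) + 1) / 2 ^ (p.1 + 2 + 1) + 1)
          + (2 ^ (p.1 + 2) - 1)) :=
      Primrec.nat_add.comp
        (Primrec.nat_mul.comp hpow1
          (Primrec.nat_add.comp
            (Primrec.nat_div.comp (Primrec.nat_add.comp hb (Primrec.const 1)) hpow1)
            (Primrec.const 1)))
        (Primrec.nat_sub.comp hpow0 (Primrec.const 1))
    exact h1.of_eq fun p => rfl
  exact (Primrec.pair hx (Primrec.pair
    (Primrec.nat_sub.comp (Primrec.nat_mul.comp hnum hx) hden)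
    (Primrec.nat_mul.comp hden hx))).of_eq fun p => rfl

lemma primrec_chS : Primrec₂ chS := by
  have hinit : Primrec (fun t : ℕ => ((0:ℕ), (1:ℕ), 2 ^ (bin t).length)) :=
    Primrec.pair (Primrec.const 0) (Primrec.pair (Primrec.const 1)
      (primrec_pow.comp (Primrec.const 2) (Primrec.list_length.comp primrec_bin)))
  have := Primrec.nat_iterate (Primrec.snd (α := ℕ) (β := ℕ))
    (hinit.comp Primrec.fst)
    ((primrec_stp.comp (Primrec.pair (Primrec.fst.comp Primrec.fst) Primrec.snd)).to₂)
  exact this.to₂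

lemma primrec_M : Primrec₂ M := by
  have := primrec_chS.comp (Primrec.fst (α := ℕ) (β := ℕ))
    (Primrec.nat_add.comp Primrec.snd (Primrec.const 1))
  exact (Primrec.fst.comp this).to₂

lemma primrec_isIn : Primrec₂ isIn := by
  have h1 : Primrec (fun p : ℕ × ℕ => decide (0 < p.2)) :=
    (Primrec.nat_lt.comp (Primrec.const 0) Primrec.snd).decide
  have hmap : Primrec (fun p : ℕ × ℕ => (List.range (p.1+1)).map (M p.2)) :=
    Primrec.list_map
      (Primrec.list_range.comp (Primrec.nat_add.comp Primrec.fst (Primrec.const 1)))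
      ((primrec_M.comp (Primrec.snd.comp Primrec.fst) Primrec.snd).to₂)
  have hidxOf : Primrec (fun p : ℕ × ℕ => ((List.range (p.1+1)).map (M p.2)).idxOf p.1) :=
    Primrec.list_idxOf.comp Primrec.fst hmap
  have h2 : Primrec (fun p : ℕ × ℕ =>
      (((List.range (p.1+1)).map (M p.2)).idxOf p.1 != p.1 + 1)) :=
    Primrec.not.comp (Primrec.beq.comp hidxOf
      (Primrec.nat_add.comp Primrec.fst (Primrec.const 1)))
  exact ((Primrec.and.comp h1 h2).of_eq fun p => rfl).to₂

lemma primrec_sel : Primrec sel := by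
  have hrange : Primrec (fun n : ℕ => List.range (n+1)) :=
    Primrec.list_range.comp (Primrec.nat_add.comp Primrec.id (Primrec.const 1))
  have hfind : Primrec (fun n : ℕ => (List.range (n+1)).findIdx (isIn n)) :=
    Primrec.list_findIdx hrange primrec_isIn
  exact Primrec.list_getElem?.comp hrange hfind

theorem partrec_Vm {C : List Bool →. List Bool} (hC : Partrec C) : Partrec (Vm C) := by
  have hselidx : Computable (fun w : List Bool => sel (idx w)) :=
    (primrec_sel.comp primrec_idx).to_comp
  have hf : Partrec fun w : List Bool => Part.ofOption (sel (idx w)) :=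
    hselidx.ofOption
  have hg : Partrec₂ fun (_ : List Bool) (t : ℕ) => C (bin t) :=
    hC.comp (primrec_bin.to_comp.comp Computable.snd)
  exact hf.bind hg

end Stmt7

/-- For each self-delimiting Turing machine `C` there exists a tuatara machine
`V` such that `ζ_V = Ω_C`. -/
theorem stmt_7 (C : List Bool →. List Bool) (hC : Partrec C) (hsd : SelfDelim C) :
    ∃ V : List Bool →. List Bool, Partrec V ∧ zeta V ≤ 1 ∧ zeta V = Omega C := by
  exact ⟨Stmt7.Vm C, Stmt7.partrec_Vm hC,
    (Stmt7.zeta_Vm C) ▸ Stmt7.Omega_le_one hsd, Stmt7.zeta_Vm C⟩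
end
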